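/- Let A be an almost negative n×n matrix with a₁₁ > 0 such that the link matrix lk({1}, A) is reducible with respect to a partition L ⊔ M of {2,…,n}. Then a_{lm} = 0 for all l ∈ L, m ∈ M, and moreover either a_{1l} = 0 for all l ∈ L or a_{1m} = 0 for all m ∈ M; consequently A itself is reducible. -/
import Mathlib


open Matrix

/-- The link matrix `lk({0}, A)`. -/
noncomputable def lkOne {n : ℕ} (A : Matrix (Fin (n + 1)) (Fin (n + 1)) ℝ) : Matrix (Fin n) (Fin n) ℝ :=
  Matrix.of fun i j => A i.succ j.succ - A 0 i.succ * A 0 j.succ / A 0 0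

/-- A symmetric matrix is reducible if its index set admits a partition into two nonempty
parts with all entries between the parts equal to zero. -/
def MatrixReducible {m : Type*} [Fintype m] [DecidableEq m] (A : Matrix m m ℝ) : Prop :=
  ∃ L M : Finset m, L.Nonempty ∧ M.Nonempty ∧ Disjoint L M ∧ L ∪ M = Finset.univ ∧
    ∀ l ∈ L, ∀ k ∈ M, A l k = 0

/-- If `A` is almost negative with `A 0 0 > 0` and the link matrix `lk({0}, A)` is
reducible with respect to a partition `L ⊔ M` of the remaining indices, then `A l m = 0` for all
`l ∈ L`, `m ∈ M`, and either `A 0 l = 0` for all `l ∈ L` or `A 0 m = 0` for all `m ∈ M`;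
consequently `A` itself is reducible. -/
theorem stmt7 (n : ℕ) (A : Matrix (Fin (n + 1)) (Fin (n + 1)) ℝ) (hsymm : A.IsSymm)
    (hneg : ∀ i j : Fin (n + 1), i ≠ j → A i j ≤ 0) (hpos : 0 < A 0 0)
    (L M : Finset (Fin n)) (hL : L.Nonempty) (hM : M.Nonempty) (hdisj : Disjoint L M)
    (hunion : L ∪ M = Finset.univ)
    (hzero : ∀ l ∈ L, ∀ m ∈ M, lkOne A l m = 0) :
    (∀ l ∈ L, ∀ m ∈ M, A l.succ m.succ = 0) ∧
    ((∀ l ∈ L, A 0 l.succ = 0) ∨ (∀ m ∈ M, A 0 m.succ = 0)) ∧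
    MatrixReducible A := by
  have key : ∀ l ∈ L, ∀ m ∈ M, A l.succ m.succ = 0 ∧ (A 0 l.succ = 0 ∨ A 0 m.succ = 0) := by
    intro l hl m hm
    have hlm : l ≠ m := fun h => Finset.disjoint_left.mp hdisj hl (h ▸ hm)
    have h1 : A l.succ m.succ ≤ 0 := hneg _ _ (by simpa [Fin.succ_inj] using hlm)
    have h2 : A 0 l.succ ≤ 0 := hneg _ _ (Fin.succ_ne_zero l).symm
    have h3 : A 0 m.succ ≤ 0 := hneg _ _ (Fin.succ_ne_zero m).symm
    have hz := hzero l hl m hm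
    simp only [lkOne, Matrix.of_apply] at hz
    have hprod : 0 ≤ A 0 l.succ * A 0 m.succ := by nlinarith
    have hdiv : 0 ≤ A 0 l.succ * A 0 m.succ / A 0 0 := div_nonneg hprod hpos.le
    have hA0 : A l.succ m.succ = 0 := le_antisymm h1 (by linarith)
    refine ⟨hA0, ?_⟩
    have hp0 : A 0 l.succ * A 0 m.succ = 0 := by
      have hne : A 0 0 ≠ 0 := ne_of_gt hpos
      field_simp at hz
      nlinarith [hz, hA0]
    rcases mul_eq_zero.mp hp0 with h | h
    · exact Or.inl h
    · exact Or.inr h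
  have hAlm : ∀ l ∈ L, ∀ m ∈ M, A l.succ m.succ = 0 := fun l hl m hm => (key l hl m hm).1
  have hAml : ∀ m ∈ M, ∀ l ∈ L, A m.succ l.succ = 0 := by
    intro m hm l hl
    have h := hsymm.apply l.succ m.succ
    rw [h]
    exact hAlm l hl m hm
  have hor : (∀ l ∈ L, A 0 l.succ = 0) ∨ (∀ m ∈ M, A 0 m.succ = 0) := by
    by_cases hc : ∀ l ∈ L, A 0 l.succ = 0
    · exact Or.inl hc
    · push_neg at hc
      obtain ⟨l, hl, hlne⟩ := hc
      refine Or.inr fun m hm => ?_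
      rcases (key l hl m hm).2 with h | h
      · exact absurd h hlne
      · exact h
  refine ⟨hAlm, hor, ?_⟩
  have hsy : ∀ i j, A i j = A j i := fun i j => (hsymm.apply j i)
  rcases hor with hcase | hcase
  · -- A 0 l = 0 for l ∈ L : take L' = L.image succ, M' = insert 0 (M.image succ)
    refine ⟨L.image Fin.succ, insert 0 (M.image Fin.succ), hL.image _,
      Finset.insert_nonempty _ _, ?_, ?_, ?_⟩
    · rw [Finset.disjoint_left]
      rintro x hx hx'
      obtain ⟨l, hl, rfl⟩ := Finset.mem_image.mp hx
      rcases Finset.mem_insert.mp hx' with h | h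
      · exact Fin.succ_ne_zero l h
      · obtain ⟨m, hm, hme⟩ := Finset.mem_image.mp h
        have : m = l := Fin.succ_inj.mp hme
        exact Finset.disjoint_left.mp hdisj hl (this ▸ hm)
    · ext x
      simp only [Finset.mem_union, Finset.mem_insert, Finset.mem_image, Finset.mem_univ, iff_true]
      induction x using Fin.cases with
      | zero => exact Or.inr (Or.inl rfl)
      | succ i =>
        have : i ∈ L ∪ M := hunion ▸ Finset.mem_univ i
        rcases Finset.mem_union.mp this with h | h
        · exact Or.inl ⟨i, h, rfl⟩
        · exact Or.inr (Or.inr ⟨i, h, rfl⟩)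
    · intro x hx k hk
      obtain ⟨l, hl, rfl⟩ := Finset.mem_image.mp hx
      rcases Finset.mem_insert.mp hk with rfl | h
      · rw [hsy]; exact hcase l hl
      · obtain ⟨m, hm, rfl⟩ := Finset.mem_image.mp h
        exact hAlm l hl m hm
  · -- A 0 m = 0 for m ∈ M : take L' = M.image succ, M' = insert 0 (L.image succ)
    refine ⟨M.image Fin.succ, insert 0 (L.image Fin.succ), hM.image _,
      Finset.insert_nonempty _ _, ?_, ?_, ?_⟩
    · rw [Finset.disjoint_left]
      rintro x hx hx'
      obtain ⟨m, hm, rfl⟩ := Finset.mem_image.mp hx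
      rcases Finset.mem_insert.mp hx' with h | h
      · exact Fin.succ_ne_zero m h
      · obtain ⟨l, hl, hle⟩ := Finset.mem_image.mp h
        have : l = m := Fin.succ_inj.mp hle
        exact Finset.disjoint_left.mp hdisj (this ▸ hl) hm
    · ext x
      simp only [Finset.mem_union, Finset.mem_insert, Finset.mem_image, Finset.mem_univ, iff_true]
      induction x using Fin.cases with
      | zero => exact Or.inr (Or.inl rfl)
      | succ i =>
        have : i ∈ L ∪ M := hunion ▸ Finset.mem_univ i
        rcases Finset.mem_union.mp this with h | h
        · exact Or.inr (Or.inr ⟨i, h, rfl⟩)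
        · exact Or.inl ⟨i, h, rfl⟩
    · intro x hx k hk
      obtain ⟨m, hm, rfl⟩ := Finset.mem_image.mp hx
      rcases Finset.mem_insert.mp hk with rfl | h
      · rw [hsy]; exact hcase m hm
      · obtain ⟨l, hl, rfl⟩ := Finset.mem_image.mp h
        exact hAml m hm l hl
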